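/- Let H be a hypergraph with vertices v_1,…,v_n and hyperedges e_1,…,e_m, and let Ω be its nilpotent hypergraph adjacency matrix with entries in 𝔷_n ⊗ 𝔦_m. Then for every integer k ≥ 2 and every index 1 ≤ i ≤ n, one has (Ω^k)_{ii} = Σ_{I,J} ω_{I,J} · ζ_I ⊗ ε_J, where the sum is over pairs of subsets I ⊆ {1,…,n} with |I| = k and J ⊆ {1,…,m}, and ω_{I,J} is the number of k-cycles in H based at v_i whose set of visited vertices is {v_t : t ∈ I} and whose set of traversed hyperedges is {e_ℓ : ℓ ∈ J}. -/

import Mathlib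

open Finset

/-- Regular-representation action of the zeon blade `ζ_I` (product of the zeon generators
`ζ_i`, `i ∈ I`, satisfying `ζ_i ^ 2 = 0`) on the coefficient space of the algebra
`𝔷 ⊗ 𝔦`:  a multiplication by `ζ_I` sends the basis blade indexed by `(S, T)` to the one
indexed by `(I ∪ S, T)` when `I` and `S` are disjoint, and to `0` otherwise. -/
noncomputable def zetaBlade (α γ : Type*) [DecidableEq α] (I : Finset α) :
    Module.End ℝ ((Finset α × γ) → ℝ) where
  toFun c := fun p => if I ⊆ p.1 then c (p.1 \ I, p.2) else 0
  map_add' x y := by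
    funext p
    by_cases h : I ⊆ p.1 <;> simp [h]
  map_smul' r x := by
    funext p
    by_cases h : I ⊆ p.1 <;> simp [h]

/-- Regular-representation action of the idem-Clifford blade `ε_J` (product of the
idempotent generators `ε_j`, `j ∈ J`, satisfying `ε_j ^ 2 = ε_j`) on the coefficient
space: multiplication by `ε_J` sends the basis blade indexed by `(S, T)` to the one
indexed by `(S, T ∪ J)`. -/
noncomputable def epsBlade (γ β : Type*) [DecidableEq β] (J : Finset β) :
    Module.End ℝ ((γ × Finset β) → ℝ) where
  toFun c := fun p => ∑ T ∈ p.2.powerset.filter (fun T => T ∪ J = p.2), c (p.1, T)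
  map_add' x y := by
    funext p
    simp [Finset.sum_add_distrib]
  map_smul' r x := by
    funext p
    simp [Finset.mul_sum]

variable {α γ β : Type*} [DecidableEq α] [DecidableEq β]

lemma zetaBlade_apply (I : Finset α) (c : (Finset α × γ) → ℝ) (p) :
    zetaBlade α γ I c p = if I ⊆ p.1 then c (p.1 \ I, p.2) else 0 := rfl

lemma epsBlade_apply (J : Finset β) (c : (γ × Finset β) → ℝ) (p) :
    epsBlade γ β J c p = ∑ T ∈ p.2.powerset.filter (fun T => T ∪ J = p.2), c (p.1, T) := rfl

lemma zetaBlade_empty : zetaBlade α γ (∅ : Finset α) = 1 := by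
  apply LinearMap.ext; intro c; funext p
  simp [zetaBlade_apply]

lemma epsBlade_empty : epsBlade γ β (∅ : Finset β) = 1 := by
  apply LinearMap.ext; intro c; funext p
  rw [epsBlade_apply]
  rw [Finset.sum_eq_single p.2] <;> simp +contextual

lemma zetaBlade_mul (I I' : Finset α) :
    zetaBlade α γ I * zetaBlade α γ I' =
      if Disjoint I I' then zetaBlade α γ (I ∪ I') else 0 := by
  apply LinearMap.ext; intro c; funext p
  rw [Module.End.mul_apply, zetaBlade_apply]
  by_cases hd : Disjoint I I'
  · rw [if_pos hd, zetaBlade_apply]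
    by_cases h1 : I ⊆ p.1
    · rw [if_pos h1, zetaBlade_apply]
      by_cases h2 : I' ⊆ p.1 \ I
      · have hu : I ∪ I' ⊆ p.1 := union_subset h1 (h2.trans (sdiff_subset))
        rw [if_pos h2, if_pos hu, sdiff_sdiff]; rfl
      · have hu : ¬ I ∪ I' ⊆ p.1 := by
          intro h; exact h2 (subset_sdiff.2 ⟨(subset_union_right).trans h, hd.symm⟩)
        rw [if_neg h2, if_neg hu]
    · have hu : ¬ I ∪ I' ⊆ p.1 := fun h => h1 ((subset_union_left).trans h)
      rw [if_neg h1, zetaBlade_apply, if_neg hu]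
  · simp only [hd, if_false, LinearMap.zero_apply, Pi.zero_apply]
    by_cases h1 : I ⊆ p.1
    · rw [if_pos h1, zetaBlade_apply]
      obtain ⟨x, hxI, hxI'⟩ := Finset.not_disjoint_iff.mp hd
      have : ¬ I' ⊆ p.1 \ I := fun h => by
        have := h hxI'; simp [Finset.mem_sdiff, hxI] at this
      rw [if_neg this]
    · rw [if_neg h1]


lemma epsBlade_mul (J J' : Finset β) :
    epsBlade γ β J * epsBlade γ β J' = epsBlade γ β (J ∪ J') := by
  apply LinearMap.ext; intro c; funext p
  show (epsBlade γ β J) ((epsBlade γ β J') c) p = _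
  rw [epsBlade_apply, epsBlade_apply]
  simp only [epsBlade_apply]
  rw [← Finset.sum_biUnion]
  · apply Finset.sum_congr _ (fun _ _ => rfl)
    ext T'
    simp only [Finset.mem_biUnion, Finset.mem_filter, Finset.mem_powerset]
    constructor
    · rintro ⟨T, ⟨hT, hTJ⟩, hT', hT'J'⟩
      refine ⟨hT'.trans hT, ?_⟩
      ext x
      rw [← hTJ, ← hT'J']
      simp [Finset.mem_union]; tauto
    · rintro ⟨h1, h2⟩
      refine ⟨T' ∪ J', ⟨?_, ?_⟩, Finset.subset_union_left, rfl⟩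
      · rw [← h2]; intro x hx; simp [Finset.mem_union] at hx ⊢; tauto
      · ext x; rw [← h2]; simp [Finset.mem_union]; tauto
  · intro T1 h1 T2 h2 hne
    apply Finset.disjoint_left.mpr
    intro T' hT'1 hT'2
    simp only [Finset.mem_filter, Finset.mem_powerset] at hT'1 hT'2
    exact hne (by rw [← hT'1.2, ← hT'2.2])

lemma zeta_eps_commute (I : Finset α) (J : Finset β) :
    Commute (zetaBlade α (Finset β) I) (epsBlade (Finset α) β J) := by
  apply LinearMap.ext; intro c; funext p
  show (zetaBlade α (Finset β) I) ((epsBlade (Finset α) β J) c) p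
      = (epsBlade (Finset α) β J) ((zetaBlade α (Finset β) I) c) p
  rw [zetaBlade_apply, epsBlade_apply]
  by_cases h : I ⊆ p.1
  · rw [if_pos h, epsBlade_apply]
    exact Finset.sum_congr rfl (fun T _ => by rw [zetaBlade_apply, if_pos h])
  · rw [if_neg h]
    exact (Finset.sum_eq_zero (fun T _ => by rw [zetaBlade_apply, if_neg h])).symm

section pp
variable {R : Type*} [Ring R]

/-- Ordered product of a tuple in a (possibly noncommutative) ring. -/
def pp : {k : ℕ} → (Fin k → R) → R
  | 0, _ => 1
  | (_ + 1), f => f 0 * pp (fun t => f t.succ)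

@[simp] lemma pp_zero (f : Fin 0 → R) : pp f = 1 := rfl

lemma pp_succ {k : ℕ} (f : Fin (k + 1) → R) : pp f = f 0 * pp (fun t => f t.succ) := rfl

lemma pp_ite {k : ℕ} (c : Fin k → Prop) [DecidablePred c] (g : Fin k → R) :
    pp (fun t => if c t then g t else 0) = if ∀ t, c t then pp g else 0 := by
  induction k with
  | zero => simp
  | succ k ih =>
    rw [pp_succ, ih (fun t => c t.succ), pp_succ]
    by_cases h0 : c 0
    · by_cases hs : ∀ t : Fin k, c t.succ
      · rw [if_pos h0, if_pos hs, if_pos (Fin.forall_fin_succ.mpr ⟨h0, hs⟩)]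
      · have hn : ¬ ∀ t : Fin (k+1), c t := fun h => hs fun t => h t.succ
        rw [if_neg hs, mul_zero, if_neg hn]
    · have hn : ¬ ∀ t : Fin (k+1), c t := fun h => h0 (h 0)
      rw [if_neg h0, zero_mul, if_neg hn]

lemma pp_sum {k : ℕ} {ι : Type*} [Fintype ι] (F : Fin k → ι → R) :
    pp (fun t => ∑ l : ι, F t l) = ∑ es : Fin k → ι, pp (fun t => F t (es t)) := by
  induction k with
  | zero =>
    haveI : Unique (Fin 0 → ι) := ⟨⟨fun t => t.elim0⟩, fun g => funext fun t => t.elim0⟩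
    rw [pp_zero, Fintype.sum_unique, pp_zero]
  | succ k ih =>
    rw [pp_succ, ih (fun t l => F t.succ l), Finset.sum_mul_sum]
    rw [← (Fin.consEquiv (fun _ : Fin (k+1) => ι)).sum_comp
      (fun es => pp (fun t => F t (es t)))]
    rw [Fintype.sum_prod_type]
    apply Finset.sum_congr rfl; intro x _
    apply Finset.sum_congr rfl; intro es' _
    rw [pp_succ]
    simp only [Fin.consEquiv_apply, Fin.cons_zero, Fin.cons_succ]

lemma commute_pp {k : ℕ} (a : R) (f : Fin k → R) (h : ∀ t, Commute a (f t)) :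
    Commute a (pp f) := by
  induction k with
  | zero => rw [pp_zero]; exact Commute.one_right a
  | succ k ih => rw [pp_succ]; exact (h 0).mul_right (ih _ (fun t => h t.succ))

lemma pp_mul {k : ℕ} (e z : Fin k → R) (h : ∀ s t, Commute (z s) (e t)) :
    pp (fun t => e t * z t) = pp e * pp z := by
  induction k with
  | zero => simp
  | succ k ih =>
    rw [pp_succ, pp_succ e, pp_succ z, ih (fun t => e t.succ) (fun t => z t.succ)
      (fun s t => h s.succ t.succ)]
    have hc : Commute (z 0) (pp (fun t => e t.succ)) :=
      commute_pp _ _ (fun t => h 0 t.succ)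
    rw [mul_assoc, ← mul_assoc (z 0), hc.eq, mul_assoc, mul_assoc]
end pp

lemma image_succ_insert {k : ℕ} {α : Type*} [DecidableEq α] (g : Fin (k+1) → α) :
    Finset.image g Finset.univ = insert (g 0) (Finset.image (fun t : Fin k => g t.succ) Finset.univ) := by
  ext a
  simp only [Finset.mem_image, Finset.mem_insert, Finset.mem_univ, true_and]
  constructor
  · rintro ⟨t, rfl⟩
    induction t using Fin.cases with
    | zero => exact Or.inl rfl
    | succ s => exact Or.inr ⟨s, rfl⟩
  · rintro (rfl | ⟨s, rfl⟩)
    exacts [⟨0, rfl⟩, ⟨s.succ, rfl⟩]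

lemma pp_eps {k : ℕ} (es : Fin k → β) :
    pp (fun t => epsBlade γ β {es t}) = epsBlade γ β (Finset.image es Finset.univ) := by
  induction k with
  | zero => simp [epsBlade_empty]
  | succ k ih =>
    rw [pp_succ, ih (fun t => es t.succ), epsBlade_mul, image_succ_insert es]
    congr 1

lemma pp_zeta {k : ℕ} (g : Fin k → α) :
    pp (fun t => zetaBlade α γ {g t}) =
      if Function.Injective g then zetaBlade α γ (Finset.image g Finset.univ) else 0 := by
  induction k with
  | zero =>
    rw [pp_zero, if_pos (Function.injective_of_subsingleton g)]
    simp [zetaBlade_empty]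
  | succ k ih =>
    rw [pp_succ, ih (fun t => g t.succ)]
    by_cases hti : Function.Injective (fun t : Fin k => g t.succ)
    · rw [if_pos hti, zetaBlade_mul]
      by_cases hmem : g 0 ∈ Finset.image (fun t : Fin k => g t.succ) Finset.univ
      · have hnd : ¬ Disjoint {g 0} (Finset.image (fun t : Fin k => g t.succ) Finset.univ) := by
          rw [Finset.not_disjoint_iff]
          exact ⟨g 0, Finset.mem_singleton_self _, hmem⟩
        have hni : ¬ Function.Injective g := by
          obtain ⟨t, -, ht⟩ := Finset.mem_image.mp hmem
          exact fun hg => Fin.succ_ne_zero t (hg ht)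
        rw [if_neg hnd, if_neg hni]
      · have hd : Disjoint {g 0} (Finset.image (fun t : Fin k => g t.succ) Finset.univ) := by
          rw [Finset.disjoint_left]
          intro a ha
          rw [Finset.mem_singleton] at ha
          subst ha; exact hmem
        have hgi : Function.Injective g := by
          rw [← Fin.cons_self_tail g, Fin.cons_injective_iff]
          refine ⟨?_, hti⟩
          rintro ⟨t, ht⟩
          exact hmem (Finset.mem_image.mpr ⟨t, Finset.mem_univ t, ht⟩)
        rw [if_pos hd, if_pos hgi, image_succ_insert g]
        congr 1
    · have hn : ¬ Function.Injective g := fun hg => hti (hg.comp (Fin.succ_injective k))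
      rw [if_neg hti, mul_zero, if_neg hn]

lemma pow_entry {N : ℕ} {R : Type*} [Ring R] (A : Matrix (Fin N) (Fin N) R) (k : ℕ)
    (i j : Fin N) :
    (A ^ k) i j = ∑ vs : Fin (k + 1) → Fin N,
      if vs 0 = i ∧ vs (Fin.last k) = j then
        pp (fun t : Fin k => A (vs t.castSucc) (vs t.succ)) else 0 := by
  induction k generalizing i with
  | zero =>
    rw [pow_zero, Matrix.one_apply,
      ← Equiv.sum_comp (Equiv.funUnique (Fin 1) (Fin N)).symm]
    by_cases hij : i = j
    · subst hij
      simp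
    · rw [Finset.sum_eq_zero, if_neg hij]
      intro x _
      rw [if_neg]
      rintro ⟨rfl, rfl⟩
      exact hij rfl
  | succ k ih =>
    have key : ∀ (x : Fin N) (w : Fin (k + 1) → Fin N),
        (pp (fun t : Fin (k+1) =>
          A ((Fin.cons x w : Fin (k+2) → Fin N) t.castSucc)
            ((Fin.cons x w : Fin (k+2) → Fin N) t.succ)) : R)
          = A x (w 0) * pp (fun t : Fin k => A (w t.castSucc) (w t.succ)) := by
      intro x w
      rw [pp_succ]
      simp only [Fin.castSucc_zero, Fin.cons_zero, Fin.cons_succ, ← Fin.succ_castSucc]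
    rw [pow_succ', Matrix.mul_apply]
    simp only [ih]
    trans (∑ w : Fin (k + 1) → Fin N, if w (Fin.last k) = j then
        A i (w 0) * pp (fun t : Fin k => A (w t.castSucc) (w t.succ)) else 0)
    · simp only [Finset.mul_sum]
      rw [Finset.sum_comm]
      apply Finset.sum_congr rfl
      intro w _
      rw [Finset.sum_eq_single (w 0) (fun x _ hx => by
          rw [mul_ite, mul_zero, if_neg (fun h => hx h.1.symm)])
        (fun h => absurd (Finset.mem_univ _) h)]
      by_cases hlast : w (Fin.last k) = j
      · rw [if_pos (show w 0 = w 0 ∧ w (Fin.last k) = j from ⟨rfl, hlast⟩), if_pos hlast]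
      · rw [if_neg (show ¬(w 0 = w 0 ∧ w (Fin.last k) = j) from fun h => hlast h.2),
          if_neg hlast, mul_zero]
    · rw [← Equiv.sum_comp (Fin.consEquiv (fun _ : Fin (k + 2) => Fin N))
        (fun vs => if vs 0 = i ∧ vs (Fin.last (k+1)) = j then
          pp (fun t : Fin (k+1) => A (vs t.castSucc) (vs t.succ)) else 0),
        Fintype.sum_prod_type, Finset.sum_comm]
      apply Finset.sum_congr rfl
      intro w _
      have hterm : ∀ x : Fin N,
          (if (Fin.consEquiv (fun _ : Fin (k + 2) => Fin N)) (x, w) 0 = i ∧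
              (Fin.consEquiv (fun _ : Fin (k + 2) => Fin N)) (x, w) (Fin.last (k+1)) = j then
            pp (fun t : Fin (k+1) =>
              A ((Fin.consEquiv (fun _ : Fin (k + 2) => Fin N)) (x, w) t.castSucc)
                ((Fin.consEquiv (fun _ : Fin (k + 2) => Fin N)) (x, w) t.succ)) else 0)
          = if x = i ∧ w (Fin.last k) = j then
              A x (w 0) * pp (fun t : Fin k => A (w t.castSucc) (w t.succ)) else 0 := by
        intro x
        have h0 : (Fin.consEquiv (fun _ : Fin (k + 2) => Fin N)) (x, w) 0 = x := rfl
        have hl : (Fin.consEquiv (fun _ : Fin (k + 2) => Fin N)) (x, w) (Fin.last (k+1))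
            = w (Fin.last k) := by
          simp only [Fin.consEquiv_apply]
          rw [← Fin.succ_last, Fin.cons_succ]
        rw [h0, hl]
        by_cases hc : x = i ∧ w (Fin.last k) = j
        · rw [if_pos hc, if_pos hc]
          exact key x w
        · rw [if_neg hc, if_neg hc]
      simp only [hterm]
      rw [Finset.sum_eq_single i (fun x _ hx => by rw [if_neg (fun h => hx h.1)])
        (fun h => absurd (Finset.mem_univ _) h)]
      by_cases hlast : w (Fin.last k) = j
      · rw [if_pos hlast, if_pos (show i = i ∧ w (Fin.last k) = j from ⟨rfl, hlast⟩)]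
      · rw [if_neg hlast, if_neg (show ¬(i = i ∧ w (Fin.last k) = j) from fun h => hlast h.2)]

section rot
variable {k n : ℕ}

lemma rot_eq (hk : 2 ≤ k) (vs : Fin (k + 1) → Fin n) (h0 : vs (Fin.last k) = vs 0)
    (t : Fin k) :
    vs t.succ = vs (haveI : NeZero k := ⟨by omega⟩; ((t + 1 : Fin k)).castSucc) := by
  haveI : NeZero k := ⟨by omega⟩
  by_cases h : (t : ℕ) + 1 = k
  · have h1 : t.succ = Fin.last k := by
      ext; simpa using h
    have h2 : (t + 1 : Fin k) = 0 := by
      ext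
      simp [Fin.add_def, Fin.val_one', Nat.mod_eq_of_lt (show 1 < k by omega), h]
    rw [h1, h2, h0]
    exact congrArg vs (by ext; simp [Fin.val_zero])
  · have h2 : ((t + 1 : Fin k)).castSucc = t.succ := by
      ext
      have h1v : (1 : Fin k).val = 1 := by
        simp [Fin.val_one', Nat.mod_eq_of_lt (show 1 < k by omega)]
      simp only [Fin.coe_castSucc, Fin.val_add, Fin.val_succ, h1v]
      rw [Nat.mod_eq_of_lt (by omega)]
    rw [h2]

lemma inj_succ_iff_inj_castSucc (hk : 2 ≤ k) (vs : Fin (k + 1) → Fin n)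
    (h0 : vs (Fin.last k) = vs 0) :
    Function.Injective (fun t : Fin k => vs t.succ) ↔
      Function.Injective (fun t : Fin k => vs t.castSucc) := by
  haveI : NeZero k := ⟨by omega⟩
  have : (fun t : Fin k => vs t.succ) =
      (fun t : Fin k => vs t.castSucc) ∘ (Equiv.addRight (1 : Fin k)) := by
    funext t
    exact rot_eq hk vs h0 t
  rw [this]
  exact (Equiv.addRight (1 : Fin k)).injective_comp _

lemma castSucc_eq_succ_sub_one (hk : 2 ≤ k) (vs : Fin (k + 1) → Fin n)
    (h0 : vs (Fin.last k) = vs 0) (s : Fin k) :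
    haveI : NeZero k := ⟨by omega⟩
    vs s.castSucc = vs (s - 1).succ := by
  haveI : NeZero k := ⟨by omega⟩
  rw [rot_eq hk vs h0 (s - 1), sub_add_cancel]

lemma image_eq_image_succ (hk : 2 ≤ k) (vs : Fin (k + 1) → Fin n)
    (h0 : vs (Fin.last k) = vs 0) :
    Finset.image vs Finset.univ =
      Finset.image (fun t : Fin k => vs t.succ) Finset.univ := by
  haveI : NeZero k := ⟨by omega⟩
  ext a
  simp only [Finset.mem_image, Finset.mem_univ, true_and]
  constructor
  · rintro ⟨t, rfl⟩
    induction t using Fin.lastCases with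
    | last =>
      refine ⟨0 - 1, ?_⟩
      rw [← castSucc_eq_succ_sub_one hk vs h0 0, h0]
      exact congrArg vs (by ext; simp [Fin.val_zero])
    | cast s =>
      exact ⟨s - 1, (castSucc_eq_succ_sub_one hk vs h0 s).symm⟩
  · rintro ⟨t, rfl⟩
    exact ⟨t.succ, rfl⟩

lemma walk_ne (hk : 2 ≤ k) (vs : Fin (k + 1) → Fin n) (h0 : vs (Fin.last k) = vs 0)
    (hinj : Function.Injective (fun t : Fin k => vs t.succ)) (t : Fin k) :
    vs t.castSucc ≠ vs t.succ := by
  haveI : NeZero k := ⟨by omega⟩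
  rw [castSucc_eq_succ_sub_one hk vs h0 t]
  intro h
  have := hinj h
  have h1 : (1 : Fin k) ≠ 0 := by
    intro h1
    have := congrArg Fin.val h1
    simp [Fin.val_one', Nat.mod_eq_of_lt (show 1 < k by omega)] at this
  exact h1 (by
    have : t - 1 + 1 = t + 1 := by rw [this]
    have h2 : t = t + 1 := by rwa [sub_add_cancel] at this
    have := (left_eq_add).mp h2
    exact this)
end rot

/-- The nilpotent hypergraph adjacency matrix `Ω = X Z` of the hypergraph on vertices
`Fin n` whose hyperedges are `E 0, …, E (m-1)`:  `X i ℓ = ε_ℓ` if `v_i ∈ e_ℓ`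
(and `0` otherwise), `Z ℓ j = ζ_j` if `v_j ∈ e_ℓ` (and `0` otherwise). -/
noncomputable def Omega {n m : ℕ} (E : Fin m → Finset (Fin n)) :
    Matrix (Fin n) (Fin n)
      (Module.End ℝ ((Finset (Fin n) × Finset (Fin m)) → ℝ)) :=
  (Matrix.of fun (i : Fin n) (l : Fin m) =>
      if i ∈ E l then epsBlade (Finset (Fin n)) (Fin m) {l} else 0) *
  (Matrix.of fun (l : Fin m) (j : Fin n) =>
      if j ∈ E l then zetaBlade (Fin n) (Finset (Fin m)) {j} else 0)

/-- A `k`-walk in the hypergraph with hyperedges `E`: consecutive vertices are distinct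
and both belong to the hyperedge used at that step. -/
def IsWalk {n m : ℕ} (E : Fin m → Finset (Fin n)) {k : ℕ}
    (vs : Fin (k + 1) → Fin n) (es : Fin k → Fin m) : Prop :=
  ∀ t : Fin k, vs t.castSucc ≠ vs t.succ ∧ vs t.castSucc ∈ E (es t) ∧ vs t.succ ∈ E (es t)

/-- For a hypergraph `H` with `n` vertices and `m` (nonempty) hyperedges,
for every `k ≥ 2` and every vertex `i`,
`(Ω^k)_{ii} = Σ_{I,J} ω_{I,J} ζ_I ε_J`, the sum being over subsets `I` of the vertex set
with `|I| = k` and subsets `J` of the hyperedge index set, where `ω_{I,J}` is the number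
of `k`-cycles based at `v_i` (closed `k`-walks whose first `k` vertices are pairwise
distinct) with visited vertex set `I` and traversed hyperedge set `J`. -/
theorem zeon_hypergraph_cycle_enumeration {n m : ℕ} (E : Fin m → Finset (Fin n))
    (hE : ∀ l : Fin m, (E l).Nonempty)
    (k : ℕ) (hk : 2 ≤ k) (i : Fin n) :
    ((Omega E) ^ k) i i =
      ∑ I ∈ (Finset.univ : Finset (Fin n)).powersetCard k,
        ∑ J ∈ (Finset.univ : Finset (Fin m)).powerset,
          (Nat.card {w : (Fin (k + 1) → Fin n) × (Fin k → Fin m) //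
              IsWalk E w.1 w.2 ∧ w.1 0 = i ∧ w.1 (Fin.last k) = i ∧
              Function.Injective (fun t : Fin k => w.1 t.castSucc) ∧
              Finset.image w.1 Finset.univ = I ∧ Finset.image w.2 Finset.univ = J}) •
            (zetaBlade (Fin n) (Finset (Fin m)) I * epsBlade (Finset (Fin n)) (Fin m) J) := by
  classical
  have omega_apply : ∀ a b : Fin n, Omega E a b =
      ∑ l : Fin m, if a ∈ E l ∧ b ∈ E l then
        epsBlade (Finset (Fin n)) (Fin m) {l} * zetaBlade (Fin n) (Finset (Fin m)) {b}
      else 0 := by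
    intro a b
    rw [Omega, Matrix.mul_apply]
    apply Finset.sum_congr rfl
    intro l _
    rw [Matrix.of_apply, Matrix.of_apply]
    by_cases h1 : a ∈ E l <;> by_cases h2 : b ∈ E l <;> simp [h1, h2]
  have inner : ∀ (vs : Fin (k+1) → Fin n) (es : Fin k → Fin m),
      pp (fun t : Fin k => if vs t.castSucc ∈ E (es t) ∧ vs t.succ ∈ E (es t) then
          epsBlade (Finset (Fin n)) (Fin m) {es t} *
            zetaBlade (Fin n) (Finset (Fin m)) {vs t.succ} else 0)
        = if (∀ t : Fin k, vs t.castSucc ∈ E (es t) ∧ vs t.succ ∈ E (es t)) ∧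
              Function.Injective (fun t : Fin k => vs t.succ) then
            zetaBlade (Fin n) (Finset (Fin m))
                (Finset.image (fun t : Fin k => vs t.succ) Finset.univ) *
              epsBlade (Finset (Fin n)) (Fin m) (Finset.image es Finset.univ)
          else 0 := by
    intro vs es
    rw [pp_ite]
    by_cases hc : ∀ t : Fin k, vs t.castSucc ∈ E (es t) ∧ vs t.succ ∈ E (es t)
    · rw [if_pos hc,
        pp_mul _ _ (fun s t => zeta_eps_commute {vs s.succ} {es t}),
        pp_eps, pp_zeta]
      by_cases hinj : Function.Injective (fun t : Fin k => vs t.succ)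
      · rw [if_pos hinj, if_pos (⟨hc, hinj⟩ :
          (∀ t : Fin k, vs t.castSucc ∈ E (es t) ∧ vs t.succ ∈ E (es t)) ∧
            Function.Injective (fun t : Fin k => vs t.succ))]
        exact ((zeta_eps_commute _ _).eq).symm
      · rw [if_neg hinj, mul_zero, if_neg
          (fun h : (∀ t : Fin k, vs t.castSucc ∈ E (es t) ∧ vs t.succ ∈ E (es t)) ∧
            Function.Injective (fun t : Fin k => vs t.succ) => hinj h.2)]
    · rw [if_neg hc, if_neg
        (fun h : (∀ t : Fin k, vs t.castSucc ∈ E (es t) ∧ vs t.succ ∈ E (es t)) ∧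
          Function.Injective (fun t : Fin k => vs t.succ) => hc h.1)]
  have lhs_eq : ∀ vs : Fin (k+1) → Fin n,
      (if vs 0 = i ∧ vs (Fin.last k) = i then
        pp (fun t : Fin k => Omega E (vs t.castSucc) (vs t.succ)) else 0)
      = ∑ es : Fin k → Fin m,
          if (vs 0 = i ∧ vs (Fin.last k) = i) ∧
             (∀ t : Fin k, vs t.castSucc ∈ E (es t) ∧ vs t.succ ∈ E (es t)) ∧
             Function.Injective (fun t : Fin k => vs t.succ) then
            zetaBlade (Fin n) (Finset (Fin m))
                (Finset.image (fun t : Fin k => vs t.succ) Finset.univ) *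
              epsBlade (Finset (Fin n)) (Fin m) (Finset.image es Finset.univ)
          else 0 := by
    intro vs
    by_cases hv : vs 0 = i ∧ vs (Fin.last k) = i
    · rw [if_pos hv]
      have harg : (fun t : Fin k => Omega E (vs t.castSucc) (vs t.succ))
          = fun t : Fin k => ∑ l : Fin m, if vs t.castSucc ∈ E l ∧ vs t.succ ∈ E l then
              epsBlade (Finset (Fin n)) (Fin m) {l} *
                zetaBlade (Fin n) (Finset (Fin m)) {vs t.succ} else 0 := by
        funext t; exact omega_apply _ _
      rw [harg, pp_sum]
      apply Finset.sum_congr rfl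
      intro es _
      rw [inner vs es]
      by_cases h2 : (∀ t : Fin k, vs t.castSucc ∈ E (es t) ∧ vs t.succ ∈ E (es t)) ∧
          Function.Injective (fun t : Fin k => vs t.succ)
      · rw [if_pos h2, if_pos ⟨hv, h2⟩]
      · rw [if_neg h2, if_neg (fun h => h2 h.2)]
    · rw [if_neg hv, Finset.sum_eq_zero]
      intro es _
      rw [if_neg (fun h => hv h.1)]
  rw [pow_entry]
  simp only [lhs_eq]
  trans (∑ w ∈ Finset.univ.filter
      (fun w : (Fin (k + 1) → Fin n) × (Fin k → Fin m) =>
        IsWalk E w.1 w.2 ∧ w.1 0 = i ∧ w.1 (Fin.last k) = i ∧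
        Function.Injective (fun t : Fin k => w.1 t.castSucc)),
      zetaBlade (Fin n) (Finset (Fin m)) (Finset.image w.1 Finset.univ) *
        epsBlade (Finset (Fin n)) (Fin m) (Finset.image w.2 Finset.univ))
  · rw [Finset.sum_filter, Fintype.sum_prod_type]
    apply Finset.sum_congr rfl
    intro vs _
    apply Finset.sum_congr rfl
    intro es _
    by_cases hC : (vs 0 = i ∧ vs (Fin.last k) = i) ∧
        (∀ t : Fin k, vs t.castSucc ∈ E (es t) ∧ vs t.succ ∈ E (es t)) ∧
        Function.Injective (fun t : Fin k => vs t.succ)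
    · obtain ⟨⟨hv0, hvl⟩, hmem, hinj⟩ := hC
      have h0 : vs (Fin.last k) = vs 0 := by rw [hvl, hv0]
      have hP : IsWalk E vs es ∧ vs 0 = i ∧ vs (Fin.last k) = i ∧
          Function.Injective (fun t : Fin k => vs t.castSucc) :=
        ⟨fun t => ⟨walk_ne hk vs h0 hinj t, (hmem t).1, (hmem t).2⟩, hv0, hvl,
          (inj_succ_iff_inj_castSucc hk vs h0).mp hinj⟩
      rw [if_pos ⟨⟨hv0, hvl⟩, hmem, hinj⟩, if_pos hP,
        image_eq_image_succ hk vs h0]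
    · rw [if_neg hC, if_neg (fun hP : IsWalk E vs es ∧ vs 0 = i ∧ vs (Fin.last k) = i ∧
          Function.Injective (fun t : Fin k => vs t.castSucc) => by
        obtain ⟨hwalk, hv0, hvl, hinjc⟩ := hP
        have h0 : vs (Fin.last k) = vs 0 := by rw [hvl, hv0]
        exact hC ⟨⟨hv0, hvl⟩, fun t => ⟨(hwalk t).2.1, (hwalk t).2.2⟩,
          (inj_succ_iff_inj_castSucc hk vs h0).mpr hinjc⟩)]
  · have hcard : ∀ (I : Finset (Fin n)) (J : Finset (Fin m)),
        (Nat.card {w : (Fin (k + 1) → Fin n) × (Fin k → Fin m) //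
            IsWalk E w.1 w.2 ∧ w.1 0 = i ∧ w.1 (Fin.last k) = i ∧
            Function.Injective (fun t : Fin k => w.1 t.castSucc) ∧
            Finset.image w.1 Finset.univ = I ∧ Finset.image w.2 Finset.univ = J}) •
          (zetaBlade (Fin n) (Finset (Fin m)) I * epsBlade (Finset (Fin n)) (Fin m) J)
        = ∑ w ∈ Finset.univ.filter
            (fun w : (Fin (k + 1) → Fin n) × (Fin k → Fin m) =>
              IsWalk E w.1 w.2 ∧ w.1 0 = i ∧ w.1 (Fin.last k) = i ∧
              Function.Injective (fun t : Fin k => w.1 t.castSucc) ∧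
              Finset.image w.1 Finset.univ = I ∧ Finset.image w.2 Finset.univ = J),
            zetaBlade (Fin n) (Finset (Fin m)) (Finset.image w.1 Finset.univ) *
              epsBlade (Finset (Fin n)) (Fin m) (Finset.image w.2 Finset.univ) := by
      intro I J
      rw [Nat.card_eq_fintype_card, Fintype.card_subtype, ← Finset.sum_const]
      apply Finset.sum_congr rfl
      intro w hw
      rw [Finset.mem_filter] at hw
      rw [hw.2.2.2.2.2.1, hw.2.2.2.2.2.2]
    rw [show (∑ I ∈ (Finset.univ : Finset (Fin n)).powersetCard k,
        ∑ J ∈ (Finset.univ : Finset (Fin m)).powerset, _) = _ from rfl]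
    simp only [hcard]
    have hset : ∀ (I : Finset (Fin n)) (J : Finset (Fin m)),
        Finset.univ.filter
            (fun w : (Fin (k + 1) → Fin n) × (Fin k → Fin m) =>
              IsWalk E w.1 w.2 ∧ w.1 0 = i ∧ w.1 (Fin.last k) = i ∧
              Function.Injective (fun t : Fin k => w.1 t.castSucc) ∧
              Finset.image w.1 Finset.univ = I ∧ Finset.image w.2 Finset.univ = J)
        = (Finset.univ.filter
            (fun w : (Fin (k + 1) → Fin n) × (Fin k → Fin m) =>
              IsWalk E w.1 w.2 ∧ w.1 0 = i ∧ w.1 (Fin.last k) = i ∧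
              Function.Injective (fun t : Fin k => w.1 t.castSucc))).filter
            (fun w => (Finset.image w.1 Finset.univ, Finset.image w.2 Finset.univ) = (I, J)) := by
      intro I J
      rw [Finset.filter_filter]
      apply Finset.filter_congr
      intro w _
      simp only [Prod.mk.injEq]
      tauto
    simp only [hset]
    rw [← Finset.sum_product']
    have hmaps : ∀ w ∈ Finset.univ.filter
        (fun w : (Fin (k + 1) → Fin n) × (Fin k → Fin m) =>
          IsWalk E w.1 w.2 ∧ w.1 0 = i ∧ w.1 (Fin.last k) = i ∧
          Function.Injective (fun t : Fin k => w.1 t.castSucc)),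
        (Finset.image w.1 Finset.univ, Finset.image w.2 Finset.univ) ∈
          (Finset.univ : Finset (Fin n)).powersetCard k ×ˢ
            (Finset.univ : Finset (Fin m)).powerset := by
      intro w hw
      rw [Finset.mem_filter] at hw
      obtain ⟨-, hwalk, hv0, hvl, hinjc⟩ := hw
      have h0 : w.1 (Fin.last k) = w.1 0 := by rw [hvl, hv0]
      rw [Finset.mem_product]
      constructor
      · rw [Finset.mem_powersetCard]
        refine ⟨Finset.subset_univ _, ?_⟩
        rw [image_eq_image_succ hk w.1 h0,
          Finset.card_image_of_injective _ ((inj_succ_iff_inj_castSucc hk w.1 h0).mpr hinjc),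
          Finset.card_univ, Fintype.card_fin]
      · exact Finset.mem_powerset.mpr (Finset.subset_univ _)
    rw [← Finset.sum_fiberwise_of_maps_to hmaps
      (fun w : (Fin (k + 1) → Fin n) × (Fin k → Fin m) =>
        zetaBlade (Fin n) (Finset (Fin m)) (Finset.image w.1 Finset.univ) *
          epsBlade (Finset (Fin n)) (Fin m) (Finset.image w.2 Finset.univ))]
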